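/- For any c > 0, the function f(t) = ((1+c)/(c^t + c^{1-t}))^{1/(t(1-t))} is increasing on (0, 1/2) and decreasing on (1/2, 1). -/

import Mathlib

open Real Set

lemma q_hasDeriv {y : ℝ} (hy : 0 < y) :
    HasDerivAt (fun y => Real.sinh y / (y * Real.cosh y))
      ((Real.cosh y * (y * Real.cosh y) -
        Real.sinh y * (1 * Real.cosh y + y * Real.sinh y)) / (y * Real.cosh y) ^ 2) y := by
  have hden : y * Real.cosh y ≠ 0 := by positivity
  exact (Real.hasDerivAt_sinh y).div ((hasDerivAt_id y).mul (Real.hasDerivAt_cosh y)) hden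

lemma q_anti : AntitoneOn (fun y => Real.sinh y / (y * Real.cosh y)) (Ioi (0:ℝ)) := by
  have hint : interior (Ioi (0:ℝ)) = Ioi (0:ℝ) := interior_Ioi
  apply antitoneOn_of_deriv_nonpos (convex_Ioi 0)
  · exact fun y hy => ((q_hasDeriv hy).continuousAt).continuousWithinAt
  · rw [hint]; exact fun y hy => (q_hasDeriv hy).differentiableAt.differentiableWithinAt
  · rw [hint]
    intro y hy
    rw [(q_hasDeriv hy).deriv]
    apply div_nonpos_of_nonpos_of_nonneg _ (by positivity)
    have h1 : y < Real.sinh y := Real.self_lt_sinh_iff.2 hy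
    have h2 : 1 ≤ Real.cosh y := Real.one_le_cosh y
    have h3 : Real.cosh y ^ 2 - Real.sinh y ^ 2 = 1 := Real.cosh_sq_sub_sinh_sq y
    nlinarith [Real.sinh_pos_iff.2 hy, Real.cosh_pos y]

lemma V_hasDeriv (X : ℝ) {r : ℝ} (hr : 0 < r) :
    HasDerivAt (fun r => Real.log (Real.cosh (Real.sqrt r * X)))
      ((Real.sinh (Real.sqrt r * X) * (1 / (2 * Real.sqrt r) * X)) /
        Real.cosh (Real.sqrt r * X)) r := by
  have h1 : HasDerivAt (fun r => Real.sqrt r * X) (1 / (2 * Real.sqrt r) * X) r :=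
    (Real.hasDerivAt_sqrt hr.ne').mul_const X
  exact (h1.cosh).log (Real.cosh_pos _).ne'

lemma V_concave (X : ℝ) (hX : 0 ≤ X) :
    ConcaveOn ℝ (Icc (0:ℝ) 1) (fun r => Real.log (Real.cosh (Real.sqrt r * X))) := by
  apply AntitoneOn.concaveOn_of_deriv (convex_Icc 0 1)
  · apply ContinuousOn.log
    · exact (Real.continuous_cosh.comp (Real.continuous_sqrt.mul continuous_const)).continuousOn
    · exact fun x _ => (Real.cosh_pos _).ne'
  · rw [interior_Icc]
    exact fun r hr => (V_hasDeriv X hr.1).differentiableAt.differentiableWithinAt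
  · rw [interior_Icc]
    intro r1 hr1 r2 hr2 h12
    rw [(V_hasDeriv X hr1.1).deriv, (V_hasDeriv X hr2.1).deriv]
    rcases eq_or_lt_of_le hX with hX0 | hX0
    · simp [← hX0]
    have hs1 : 0 < Real.sqrt r1 := Real.sqrt_pos.2 hr1.1
    have hs2 : 0 < Real.sqrt r2 := Real.sqrt_pos.2 hr2.1
    have hss : Real.sqrt r1 ≤ Real.sqrt r2 := Real.sqrt_le_sqrt h12
    have key : ∀ s : ℝ, 0 < s →
        Real.sinh (s * X) * (1 / (2 * s) * X) / Real.cosh (s * X)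
          = X ^ 2 / 2 * (Real.sinh (s * X) / ((s * X) * Real.cosh (s * X))) := by
      intro s hs
      have : Real.cosh (s * X) ≠ 0 := (Real.cosh_pos _).ne'
      field_simp
    rw [key _ hs1, key _ hs2]
    apply mul_le_mul_of_nonneg_left _ (by positivity)
    exact q_anti (mem_Ioi.2 (by positivity)) (mem_Ioi.2 (by positivity)) (by nlinarith)

lemma key_slope (X : ℝ) (hX : 0 ≤ X) {a b : ℝ} (ha : 0 ≤ a) (hab : a ≤ b) (hb : b < 1) :
    (1 - a) * (Real.log (Real.cosh X) - Real.log (Real.cosh (Real.sqrt b * X)))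
      ≤ (1 - b) * (Real.log (Real.cosh X) - Real.log (Real.cosh (Real.sqrt a * X))) := by
  have hV := V_concave X hX
  have ha1 : a < 1 := lt_of_le_of_lt hab hb
  have h1a : (0:ℝ) < 1 - a := by linarith
  have hcomb := hV.2 (show a ∈ Icc (0:ℝ) 1 from ⟨ha, ha1.le⟩)
    (show (1:ℝ) ∈ Icc (0:ℝ) 1 from ⟨zero_le_one, le_refl 1⟩)
    (show (0:ℝ) ≤ (1-b)/(1-a) from div_nonneg (by linarith) (by linarith))
    (show (0:ℝ) ≤ (b-a)/(1-a) from div_nonneg (by linarith) (by linarith))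
    (by field_simp; ring)
  have harg : (1-b)/(1-a) * a + (b-a)/(1-a) * 1 = b := by field_simp; ring
  simp only [smul_eq_mul, harg, Real.sqrt_one, one_mul] at hcomb
  set Va := Real.log (Real.cosh (Real.sqrt a * X))
  set Vb := Real.log (Real.cosh (Real.sqrt b * X))
  set V1 := Real.log (Real.cosh X)
  -- hcomb : (1-b)/(1-a) * Va + (b-a)/(1-a) * V1 ≤ Vb
  rw [div_mul_eq_mul_div, div_mul_eq_mul_div, ← add_div, div_le_iff₀ h1a] at hcomb
  nlinarith [hcomb]

lemma master (c : ℝ) (hc : 0 < c) {t1 t2 : ℝ} (h1 : t1 ∈ Ioo (0:ℝ) 1) (h2 : t2 ∈ Ioo (0:ℝ) 1)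
    (hs : |2*t2 - 1| ≤ |2*t1 - 1|) :
    ((1 + c) / (c ^ t1 + c ^ (1 - t1))) ^ (1 / (t1 * (1 - t1)))
      ≤ ((1 + c) / (c ^ t2 + c ^ (1 - t2))) ^ (1 / (t2 * (1 - t2))) := by
  set L := Real.log c with hL
  set X := |L| / 2 with hXdef
  have hX : 0 ≤ X := by positivity
  have h1pc : 1 + c = 2 * Real.exp (L/2) * Real.cosh X := by
    have hcX : Real.cosh X = Real.cosh (L/2) := by
      rw [hXdef, show |L|/2 = |L/2| by rw [abs_div]; norm_num, Real.cosh_abs]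
    rw [hcX, Real.cosh_eq]
    have e1 : Real.exp (L/2) * Real.exp (L/2) = c := by
      rw [← Real.exp_add, show L/2 + L/2 = L by ring, hL, Real.exp_log hc]
    have e2 : Real.exp (L/2) * Real.exp (-(L/2)) = 1 := by
      rw [← Real.exp_add]; simp
    linear_combination -e1 - e2
  have hsum : ∀ t : ℝ, c ^ t + c ^ (1 - t) = 2 * Real.exp (L/2) * Real.cosh (|2*t-1| * X) := by
    intro t
    have hcX : Real.cosh (|2*t-1| * X) = Real.cosh (L * t - L/2) := by
      have habs : |2*t-1| * X = |L * t - L/2| := by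
        calc |2*t-1| * X = |(2*t-1) * L| / 2 := by rw [hXdef, abs_mul]; ring
        _ = |(2*t-1) * L / 2| := by rw [abs_div]; norm_num
        _ = |L * t - L/2| := by congr 1; ring
      rw [habs, Real.cosh_abs]
    rw [Real.rpow_def_of_pos hc, Real.rpow_def_of_pos hc, hcX, Real.cosh_eq, ← hL]
    have e1 : Real.exp (L/2) * Real.exp (L * t - L/2) = Real.exp (L * t) := by
      rw [← Real.exp_add]; congr 1; ring
    have e2 : Real.exp (L/2) * Real.exp (-(L * t - L/2)) = Real.exp (L * (1 - t)) := by
      rw [← Real.exp_add]; congr 1; ring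
    linear_combination -e1 - e2
  have hratio : ∀ t : ℝ, (1+c)/(c^t + c^(1-t)) = Real.cosh X / Real.cosh (|2*t-1| * X) := by
    intro t
    rw [h1pc, hsum t]
    exact mul_div_mul_left _ _ (by positivity)
  have hfexp : ∀ t : ℝ, ((1+c)/(c^t+c^(1-t))) ^ (1/(t*(1-t))) =
      Real.exp ((1/(t*(1-t))) * (Real.log (Real.cosh X) - Real.log (Real.cosh (|2*t-1| * X)))) := by
    intro t
    rw [hratio t, Real.rpow_def_of_pos (by positivity),
      Real.log_div (Real.cosh_pos _).ne' (Real.cosh_pos _).ne', mul_comm]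
  rw [hfexp t1, hfexp t2, Real.exp_le_exp]
  set s1 := |2*t1-1| with hs1def
  set s2 := |2*t2-1| with hs2def
  have hs1lt : s1 < 1 := by
    rw [hs1def, abs_lt]; constructor <;> [linarith [h1.1]; linarith [h1.2]]
  have hs2nn : 0 ≤ s2 := abs_nonneg _
  have hp1 : t1*(1-t1) = (1 - s1^2)/4 := by rw [hs1def, sq_abs]; ring
  have hp2 : t2*(1-t2) = (1 - s2^2)/4 := by rw [hs2def, sq_abs]; ring
  have hp1pos : 0 < t1*(1-t1) := mul_pos h1.1 (by linarith [h1.2])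
  have hp2pos : 0 < t2*(1-t2) := mul_pos h2.1 (by linarith [h2.2])
  rw [one_div_mul_eq_div, one_div_mul_eq_div, div_le_div_iff₀ hp1pos hp2pos, hp1, hp2]
  have hkey := key_slope X hX (a := s2^2) (b := s1^2)
    (by positivity) (by nlinarith) (by nlinarith)
  rw [Real.sqrt_sq (abs_nonneg _), Real.sqrt_sq (abs_nonneg _)] at hkey
  rw [← hs1def, ← hs2def] at hkey
  nlinarith [hkey]

theorem heinz_multiplicative_monotone (c : ℝ) (hc : 0 < c) :
    MonotoneOn (fun t : ℝ => ((1 + c) / (c ^ t + c ^ (1 - t))) ^ (1 / (t * (1 - t))))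
      (Set.Ioo (0:ℝ) (1/2)) ∧
    AntitoneOn (fun t : ℝ => ((1 + c) / (c ^ t + c ^ (1 - t))) ^ (1 / (t * (1 - t))))
      (Set.Ioo ((1:ℝ)/2) 1) := by
  constructor
  · intro t1 ht1 t2 ht2 h12
    apply master c hc ⟨ht1.1, by linarith [ht1.2]⟩ ⟨ht2.1, by linarith [ht2.2]⟩
    rw [abs_of_neg (by linarith [ht2.2] : 2*t2 - 1 < 0),
      abs_of_neg (by linarith [ht1.2] : 2*t1 - 1 < 0)]
    linarith
  · intro t1 ht1 t2 ht2 h12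
    apply master c hc ⟨by linarith [ht2.1], ht2.2⟩ ⟨by linarith [ht1.1], ht1.2⟩
    rw [abs_of_pos (by linarith [ht1.1] : 0 < 2*t1 - 1),
      abs_of_pos (by linarith [ht2.1] : 0 < 2*t2 - 1)]
    linarith
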